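/- Let A ∈ C^{[m,n]} with n ≥ 2. Every eigenvalue λ of A lies in K(A) = ⋃_{i≠j} {z ∈ ℂ : (|z - a_{i…i}| - r_i^j(A)) |z - a_{j…j}| ≤ |a_{i j … j}| r_j(A)}, where r_i^j(A) = r_i(A) - |a_{i j … j}|. -/

import Mathlib

open Finset

/-- off-diagonal row sum r_i(A) for a complex tensor of order k+1, dimension n -/
noncomputable def rT {n k : ℕ} (A : (Fin (k+1) → Fin n) → ℂ) (i : Fin n) : ℝ :=
  ∑ α ∈ Finset.univ.filter (fun α : Fin k → Fin n => α ≠ fun _ => i),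
    ‖A (Fin.cons i α)‖

/-- r_i^j(A) = r_i(A) - |a_{ij...j}| -/
noncomputable def rTj {n k : ℕ} (A : (Fin (k+1) → Fin n) → ℂ) (i j : Fin n) : ℝ :=
  rT A i - ‖A (Fin.cons i fun _ => j)‖

/-- r_j^{Δ^S}(A): sum over index tuples all lying in S, excluding the diagonal tuple -/
noncomputable def rDelta {n k : ℕ} (A : (Fin (k+1) → Fin n) → ℂ) (S : Finset (Fin n))
    (j : Fin n) : ℝ :=
  ∑ α ∈ Finset.univ.filter (fun α : Fin k → Fin n => (∀ l, α l ∈ S) ∧ α ≠ fun _ => j),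
    ‖A (Fin.cons j α)‖

/-- r_j^{Δ^S-complement}(A): sum over index tuples not all lying in S -/
noncomputable def rDeltaC {n k : ℕ} (A : (Fin (k+1) → Fin n) → ℂ) (S : Finset (Fin n))
    (j : Fin n) : ℝ :=
  ∑ α ∈ Finset.univ.filter (fun α : Fin k → Fin n => ¬ (∀ l, α l ∈ S)),
    ‖A (Fin.cons j α)‖

/-- λ is an eigenvalue of the tensor A: A x^{m-1} = λ x^{[m-1]} for some nonzero x -/
def IsEig {n k : ℕ} (A : (Fin (k+1) → Fin n) → ℂ) (lam : ℂ) : Prop :=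
  ∃ x : Fin n → ℂ, x ≠ 0 ∧ ∀ i,
    (∑ α : Fin k → Fin n, A (Fin.cons i α) * ∏ l, x (α l)) = lam * (x i) ^ k

lemma rT_nonneg {n k : ℕ} (A : (Fin (k+1) → Fin n) → ℂ) (i : Fin n) : 0 ≤ rT A i :=
  Finset.sum_nonneg fun _ _ => norm_nonneg _

lemma cons_const {n k : ℕ} (i : Fin n) :
    (Fin.cons i (fun _ => i) : Fin (k+1) → Fin n) = fun _ => i := by
  funext j; exact Fin.cases rfl (fun l => rfl) j

theorem stmt3 {n k : ℕ} (hn : 2 ≤ n) (A : (Fin (k+1) → Fin n) → ℂ) (lam : ℂ)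
    (h : IsEig A lam) :
    ∃ i j : Fin n, i ≠ j ∧
      (‖lam - A (fun _ => i)‖ - rTj A i j) * ‖lam - A (fun _ => j)‖ ≤
        ‖A (Fin.cons i fun _ => j)‖ * rT A j := by
  obtain ⟨x, hx0, hx⟩ := h
  rcases Nat.eq_zero_or_pos k with hk | hk
  · subst hk
    have hlam : ∀ i : Fin n, lam = A (fun _ => i) := by
      intro i
      have h := hx i
      simp at h
      rw [← h]
      congr 1
      funext j
      exact Fin.cases rfl (fun l => l.elim0) j
    refine ⟨⟨0, by omega⟩, ⟨1, by omega⟩, by simp [Fin.ext_iff], ?_⟩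
    have h2 : lam - A (fun _ => (⟨1, by omega⟩ : Fin n)) = 0 := by
      rw [← hlam ⟨1, by omega⟩]; ring
    rw [h2, norm_zero, mul_zero]
    exact mul_nonneg (norm_nonneg _) (rT_nonneg A _)
  · -- k ≥ 1
    obtain ⟨t, -, htmax⟩ := Finset.exists_max_image univ (fun i => ‖x i‖)
      ⟨⟨0, by omega⟩, mem_univ _⟩
    have hxt : 0 < ‖x t‖ := by
      rcases (norm_nonneg (x t)).lt_or_eq with h | h
      · exact h
      · exfalso; apply hx0; funext i
        have h1 := htmax i (mem_univ i)
        rw [← h] at h1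
        exact norm_eq_zero.mp (le_antisymm h1 (norm_nonneg _))
    obtain ⟨s, hst⟩ : ∃ s : Fin n, s ≠ t :=
      Fintype.exists_ne_of_one_lt_card (by simp; omega) t
    set X := ‖x t‖ ^ k with hX
    set S := ‖x s‖ ^ k with hS
    have hXpos : 0 < X := pow_pos hxt k
    have prodBound : ∀ α : Fin k → Fin n, (∏ l, ‖x (α l)‖) ≤ X := by
      intro α
      calc (∏ l, ‖x (α l)‖) ≤ ∏ _l : Fin k, ‖x t‖ :=
            Finset.prod_le_prod (fun _ _ => norm_nonneg _)
              (fun l _ => htmax (α l) (mem_univ _))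
        _ = X := by rw [hX, Finset.prod_const, Finset.card_univ, Fintype.card_fin]
    -- step 1: off-diagonal identity
    have step1 : ∀ i : Fin n, ∑ α ∈ (univ : Finset (Fin k → Fin n)).erase (fun _ => i),
        A (Fin.cons i α) * ∏ l, x (α l) = (lam - A (fun _ => i)) * x i ^ k := by
      intro i
      have h1 := hx i
      rw [← Finset.add_sum_erase _ _ (mem_univ (fun _ => i : Fin k → Fin n))] at h1
      rw [cons_const, Finset.prod_const, Finset.card_univ, Fintype.card_fin] at h1
      linear_combination h1
    -- step 2: abs bound
    have step2 : ∀ i : Fin n, ‖lam - A (fun _ => i)‖ * ‖x i‖ ^ k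
        ≤ ∑ α ∈ (univ : Finset (Fin k → Fin n)).erase (fun _ => i),
          ‖A (Fin.cons i α)‖ * ∏ l, ‖x (α l)‖ := by
      intro i
      calc ‖lam - A (fun _ => i)‖ * ‖x i‖ ^ k
          = ‖(lam - A (fun _ => i)) * x i ^ k‖ := by rw [norm_mul, norm_pow]
        _ = ‖∑ α ∈ (univ : Finset (Fin k → Fin n)).erase (fun _ => i),
              A (Fin.cons i α) * ∏ l, x (α l)‖ := by rw [step1]
        _ ≤ ∑ α ∈ (univ : Finset (Fin k → Fin n)).erase (fun _ => i),
              ‖A (Fin.cons i α) * ∏ l, x (α l)‖ := norm_sum_le _ _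
        _ = _ := by
              refine Finset.sum_congr rfl fun α _ => ?_
              rw [norm_mul, norm_prod]
    have hrT : ∀ i : Fin n, rT A i = ∑ α ∈ (univ : Finset (Fin k → Fin n)).erase (fun _ => i),
        ‖A (Fin.cons i α)‖ := by
      intro i
      rw [rT, Finset.filter_ne']
    -- lemma B
    have hB : ‖lam - A (fun _ => s)‖ * S ≤ rT A s * X := by
      calc ‖lam - A (fun _ => s)‖ * S
          ≤ ∑ α ∈ (univ : Finset (Fin k → Fin n)).erase (fun _ => s),
              ‖A (Fin.cons s α)‖ * ∏ l, ‖x (α l)‖ := step2 s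
        _ ≤ ∑ α ∈ (univ : Finset (Fin k → Fin n)).erase (fun _ => s),
              ‖A (Fin.cons s α)‖ * X :=
            Finset.sum_le_sum fun α _ =>
              mul_le_mul_of_nonneg_left (prodBound α) (norm_nonneg _)
        _ = rT A s * X := by rw [hrT s, Finset.sum_mul]
    -- lemma A
    have hdne : ((fun _ => s) : Fin k → Fin n) ≠ fun _ => t := fun hc => hst (congrFun hc ⟨0, hk⟩)
    have hmem : ((fun _ => s) : Fin k → Fin n) ∈ (univ : Finset (Fin k → Fin n)).erase (fun _ => t) :=
      Finset.mem_erase.mpr ⟨hdne, mem_univ _⟩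
    have hrTj : rTj A t s = ∑ α ∈ ((univ : Finset (Fin k → Fin n)).erase (fun _ => t)).erase (fun _ => s),
        ‖A (Fin.cons t α)‖ := by
      rw [rTj, hrT t, ← Finset.add_sum_erase _ _ hmem]
      ring
    have hA : ‖lam - A (fun _ => t)‖ * X
        ≤ rTj A t s * X + ‖A (Fin.cons t fun _ => s)‖ * S := by
      have h2 := step2 t
      rw [← Finset.add_sum_erase _ _ hmem] at h2
      rw [Finset.prod_const, Finset.card_univ, Fintype.card_fin] at h2
      have h3 : ∑ α ∈ ((univ : Finset (Fin k → Fin n)).erase (fun _ => t)).erase (fun _ => s),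
          ‖A (Fin.cons t α)‖ * ∏ l, ‖x (α l)‖ ≤ rTj A t s * X := by
        rw [hrTj, Finset.sum_mul]
        exact Finset.sum_le_sum fun α _ =>
          mul_le_mul_of_nonneg_left (prodBound α) (norm_nonneg _)
      calc ‖lam - A (fun _ => t)‖ * X ≤ _ := h2
        _ ≤ rTj A t s * X + ‖A (Fin.cons t fun _ => s)‖ * S := by
            rw [add_comm]; exact add_le_add h3 le_rfl
    -- finish
    refine ⟨t, s, Ne.symm hst, ?_⟩
    set c := ‖lam - A (fun _ => t)‖ - rTj A t s with hc
    set a := ‖A (Fin.cons t fun _ => s)‖ with ha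
    set L := ‖lam - A (fun _ => s)‖ with hL
    set r := rT A s with hr
    have hA' : c * X ≤ a * S := by rw [hc, sub_mul]; linarith
    rcases le_or_gt c 0 with hcn | hcp
    · have : c * L ≤ 0 := mul_nonpos_of_nonpos_of_nonneg hcn (norm_nonneg _)
      have : 0 ≤ a * r := mul_nonneg (norm_nonneg _) (rT_nonneg A s)
      linarith
    · have hSpos : 0 < S := by
        rcases (pow_nonneg (norm_nonneg (x s)) k : (0:ℝ) ≤ S).lt_or_eq with h | h
        · exact h
        · exfalso
          have hS0 : S = 0 := hS.trans h.symm
          rw [hS0, mul_zero] at hA'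
          nlinarith [mul_pos hcp hXpos]
      have hprod : (c * X) * (L * S) ≤ (a * S) * (r * X) :=
        mul_le_mul hA' hB (mul_nonneg (norm_nonneg _) hSpos.le)
          (mul_nonneg (norm_nonneg _) hSpos.le)
      have key : (c * L) * (X * S) ≤ (a * r) * (X * S) := by nlinarith [hprod]
      exact le_of_mul_le_mul_right key (mul_pos hXpos hSpos)
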